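/- For every D > 1, ρ > 0 and ℓ > 0 there exist K > 0 and δ₀ > 0 such that the following holds for every δ ∈ (0, δ₀]. Let a < b* < b with b* − a ≥ ρ and b − b* ≥ ρ, set J = [a,b], and let V ⊆ ℝ be an interval with J ⊆ V and diam(V) ≤ ℓ. Let f : ℝ → ℝ be differentiable on J with f'(x) ≥ D for x ∈ J, and let ε : ℝ × ℝ → ℝ satisfy, for all x, x' ∈ J and y, y' ∈ V: |ε(x,y)| ≤ δ, |ε(x,y) − ε(x',y)| ≤ δ·|x − x'|, and |ε(x,y) − ε(x,y')| ≤ δ·|y − y'|. Suppose (b*, b*) is a fixed point of the Hénon-like map F(x,y) = (f(x) − ε(x,y), x), i.e. f(b*) − ε(b*, b*) = b*. Then there exists a function ψ : V → J with ψ(b*) = b*, Lipschitz with constant K·δ, such that f(ψ(y)) − ε(ψ(y), y) = ψ(ψ(y)) for all y ∈ V; equivalently, the curve {(ψ(y), y) : y ∈ V} is forward invariant under F and contains (b*, b*). Moreover ψ is the unique function V → J with these three properties (fixing b*, Lipschitz constant ≤ K·δ, and satisfying the invariance equation), and every point of the curve {(ψ(y), y) : y ∈ V} converges to (b*, b*)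 under iteration of F. -/

import Mathlib

open Set
set_option maxHeartbeats 1000000

lemma my_expand {a b D : ℝ} {f f' : ℝ → ℝ}
    (hf : ∀ x ∈ Icc a b, HasDerivWithinAt f (f' x) (Icc a b) x ∧ D ≤ f' x) :
    ∀ x ∈ Icc a b, ∀ x' ∈ Icc a b, x ≤ x' → D * (x' - x) ≤ f x' - f x := by
  intro x hx x' hx' hxx'
  have hcont : ContinuousOn f (Icc a b) := fun z hz => (hf z hz).1.continuousWithinAt
  have hmono : MonotoneOn (fun z => f z - D * z) (Icc a b) := by
    apply monotoneOn_of_hasDerivWithinAt_nonneg (convex_Icc a b)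
      (f' := fun z => f' z - D)
      (hcont.sub (continuousOn_const.mul continuousOn_id))
    · intro z hz
      rw [interior_Icc] at hz ⊢
      exact ((hf z (Ioo_subset_Icc_self hz)).1.mono Ioo_subset_Icc_self).sub
        (by have h := ((hasDerivAt_id z).const_mul D).hasDerivWithinAt (s := Ioo a b); simp only [mul_one] at h; exact h)
    · intro z hz
      rw [interior_Icc] at hz
      linarith [(hf z (Ioo_subset_Icc_self hz)).2]
  have := hmono hx hx' hxx'
  simp only at this
  nlinarith

theorem local_stable_manifold :
    ∀ D ρ ℓ : ℝ, 1 < D → 0 < ρ → 0 < ℓ →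
    ∃ K δ₀ : ℝ, 0 < K ∧ 0 < δ₀ ∧
      ∀ δ : ℝ, 0 < δ → δ ≤ δ₀ →
      ∀ a bstar b : ℝ, a < bstar → bstar < b → ρ ≤ bstar - a → ρ ≤ b - bstar →
      ∀ V : Set ℝ, V.OrdConnected → Icc a b ⊆ V → Metric.diam V ≤ ℓ →
      ∀ f f' : ℝ → ℝ,
        (∀ x ∈ Icc a b, HasDerivWithinAt f (f' x) (Icc a b) x ∧ D ≤ f' x) →
      ∀ ε : ℝ → ℝ → ℝ,
        (∀ x ∈ Icc a b, ∀ y ∈ V, |ε x y| ≤ δ) →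
        (∀ x ∈ Icc a b, ∀ x' ∈ Icc a b, ∀ y ∈ V, |ε x y - ε x' y| ≤ δ * |x - x'|) →
        (∀ x ∈ Icc a b, ∀ y ∈ V, ∀ y' ∈ V, |ε x y - ε x y'| ≤ δ * |y - y'|) →
        f bstar - ε bstar bstar = bstar →
        ∃ ψ : ℝ → ℝ,
          (∀ y ∈ V, ψ y ∈ Icc a b) ∧
          ψ bstar = bstar ∧
          (∀ y ∈ V, ∀ y' ∈ V, |ψ y - ψ y'| ≤ K * δ * |y - y'|) ∧
          (∀ y ∈ V, f (ψ y) - ε (ψ y) y = ψ (ψ y)) ∧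
          (∀ ψ' : ℝ → ℝ, (∀ y ∈ V, ψ' y ∈ Icc a b) → ψ' bstar = bstar →
            (∀ y ∈ V, ∀ y' ∈ V, |ψ' y - ψ' y'| ≤ K * δ * |y - y'|) →
            (∀ y ∈ V, f (ψ' y) - ε (ψ' y) y = ψ' (ψ' y)) →
            ∀ y ∈ V, ψ' y = ψ y) ∧
          (∀ y ∈ V,
            Filter.Tendsto
              (fun n => (fun p : ℝ × ℝ => (f p.1 - ε p.1 p.2, p.1))^[n] (ψ y, y))
              Filter.atTop (nhds (bstar, bstar))) := by
  intro D ρ ℓ hD hρ hℓ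
  refine ⟨1, min (ρ/2) (min ((D-1)/4) (1/2)), one_pos, lt_min (by linarith) (lt_min (by linarith) (by norm_num)), ?_⟩
  classical
  intro δ hδ hδ₀ a bstar b habs hbsb hρa hρb V hVord hJV hVdiam f f' hf ε hε0 hε1 hε2 hfix
  simp only [one_mul]
  have hδρ : 2 * δ ≤ ρ := by
    have := le_trans hδ₀ (min_le_left _ _); linarith
  have hδD : 4 * δ ≤ D - 1 := by
    have := le_trans hδ₀ (le_trans (min_le_right _ _) (min_le_left _ _)); linarith
  have hδhalf : δ ≤ 1/2 := le_trans hδ₀ (le_trans (min_le_right _ _) (min_le_right _ _))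
  have hab : a < b := lt_trans habs hbsb
  have hbsJ : bstar ∈ Icc a b := ⟨le_of_lt habs, le_of_lt hbsb⟩
  have hbsV : bstar ∈ V := hJV hbsJ
  have hD2 : 1 ≤ D - 2 * δ := by linarith
  set c : ℝ := 2 / (D + 1) with hc_def
  have hc0 : 0 < c := by positivity
  have hc1 : c < 1 := by rw [div_lt_one (by linarith)]; linarith
  have hcD : 1 ≤ c * (D - 2 * δ) := by
    rw [hc_def, div_mul_eq_mul_div, le_div_iff₀ (by linarith)]; nlinarith
  have hexp : ∀ x ∈ Icc a b, ∀ x' ∈ Icc a b, x ≤ x' → D * (x' - x) ≤ f x' - f x :=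
    my_expand hf
  have hexpabs : ∀ x ∈ Icc a b, ∀ x' ∈ Icc a b, D * |x' - x| ≤ |f x' - f x| := by
    intro x hx x' hx'
    rcases le_total x x' with h | h
    · have h1 := hexp x hx x' hx' h
      rw [abs_of_nonneg (by linarith), abs_of_nonneg (by nlinarith)]
      exact h1
    · have h1 := hexp x' hx' x hx h
      rw [abs_of_nonpos (by linarith), abs_of_nonpos (by nlinarith)]
      linarith
  -- the space of candidate graphs
  set inS : (ℝ → ℝ) → Prop := fun φ =>
    (∀ y ∈ V, φ y ∈ Icc a b) ∧ φ bstar = bstar ∧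
      (∀ y ∈ V, ∀ y' ∈ V, |φ y - φ y'| ≤ δ * |y - y'|) with hinS_def
  have hcontf : ContinuousOn f (Icc a b) := fun z hz => (hf z hz).1.continuousWithinAt
  -- uniqueness of roots
  have root_unique : ∀ φ : ℝ → ℝ, inS φ → ∀ y ∈ V, ∀ x ∈ Icc a b, ∀ x' ∈ Icc a b,
      f x - ε x y = φ x → f x' - ε x' y = φ x' → x = x' := by
    intro φ hφ y hy x hx x' hx' hr hr'
    have h1 := hexpabs x hx x' hx'
    have h2 : |f x' - f x| = |(φ x' - φ x) + (ε x' y - ε x y)| := by rw [← hr, ← hr']; ring_nf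
    have h3 := hφ.2.2 x' (hJV hx') x (hJV hx)
    have h4 := hε1 x' hx' x hx y hy
    have h5 : |f x' - f x| ≤ δ * |x' - x| + δ * |x' - x| := by
      rw [h2]
      calc |(φ x' - φ x) + (ε x' y - ε x y)| ≤ |φ x' - φ x| + |ε x' y - ε x y| := abs_add_le _ _
        _ ≤ δ * |x' - x| + δ * |x' - x| := by linarith
    have h6 : |x' - x| = 0 := by nlinarith [abs_nonneg (x' - x)]
    have := abs_eq_zero.mp h6; linarith
  -- existence of roots
  have haJ : a ∈ Icc a b := ⟨le_refl a, le_of_lt hab⟩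
  have hbJ : b ∈ Icc a b := ⟨le_of_lt hab, le_refl b⟩
  have hεcont : ∀ y ∈ V, ContinuousOn (fun x => ε x y) (Icc a b) := by
    intro y hy
    refine (LipschitzOnWith.of_dist_le' (K := δ) ?_).continuousOn
    intro x hx x' hx'
    rw [Real.dist_eq, Real.dist_eq]
    exact hε1 x hx x' hx' y hy
  have root_exists : ∀ φ : ℝ → ℝ, inS φ → ∀ y ∈ V, ∃ x ∈ Icc a b, f x - ε x y = φ x := by
    intro φ hφ y hy
    have hφcont : ContinuousOn φ (Icc a b) := by
      refine (LipschitzOnWith.of_dist_le' (K := δ) ?_).continuousOn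
      intro x hx x' hx'
      rw [Real.dist_eq, Real.dist_eq]
      exact hφ.2.2 x (hJV hx) x' (hJV hx')
    have hgcont : ContinuousOn (fun x => f x - ε x y - φ x) (Icc a b) :=
      (hcontf.sub (hεcont y hy)).sub hφcont
    have hgbs : |f bstar - ε bstar y - φ bstar| ≤ 2 * δ := by
      have h1 : f bstar - ε bstar y - φ bstar = ε bstar bstar - ε bstar y := by
        rw [hφ.2.1]; linarith
      rw [h1]
      have := hε0 bstar hbsJ bstar hbsV
      have := hε0 bstar hbsJ y hy
      calc |ε bstar bstar - ε bstar y| ≤ |ε bstar bstar| + |ε bstar y| := abs_sub _ _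
        _ ≤ 2 * δ := by linarith
    have hga : f a - ε a y - φ a ≤ 0 := by
      have h1 := hexp a haJ bstar hbsJ (le_of_lt habs)
      have h2 := abs_le.mp (hε1 bstar hbsJ a haJ y hy)
      have h3 := abs_le.mp (hφ.2.2 bstar hbsV a (hJV haJ))
      have h4 := abs_le.mp hgbs
      rw [abs_of_nonneg (by linarith : (0:ℝ) ≤ bstar - a)] at h2 h3
      nlinarith
    have hgb : 0 ≤ f b - ε b y - φ b := by
      have h1 := hexp bstar hbsJ b hbJ (le_of_lt hbsb)
      have h2 := abs_le.mp (hε1 b hbJ bstar hbsJ y hy)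
      have h3 := abs_le.mp (hφ.2.2 b (hJV hbJ) bstar hbsV)
      have h4 := abs_le.mp hgbs
      rw [abs_of_nonneg (by linarith : (0:ℝ) ≤ b - bstar)] at h2 h3
      nlinarith
    have h0 : (0:ℝ) ∈ Icc (f a - ε a y - φ a) (f b - ε b y - φ b) := ⟨hga, hgb⟩
    obtain ⟨x, hx, hgx⟩ := intermediate_value_Icc (le_of_lt hab) hgcont h0
    exact ⟨x, hx, by dsimp at hgx; linarith⟩
  -- the graph transform
  set Γ : (ℝ → ℝ) → ℝ → ℝ := fun φ y =>
    if h : ∃ x ∈ Icc a b, f x - ε x y = φ x then h.choose else bstar with hΓ_def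
  have hΓ_root : ∀ φ : ℝ → ℝ, inS φ → ∀ y ∈ V,
      Γ φ y ∈ Icc a b ∧ f (Γ φ y) - ε (Γ φ y) y = φ (Γ φ y) := by
    intro φ hφ y hy
    obtain ⟨x, hx, hr⟩ := root_exists φ hφ y hy
    have hex : ∃ x ∈ Icc a b, f x - ε x y = φ x := ⟨x, hx, hr⟩
    rw [hΓ_def]; simp only [dif_pos hex]
    exact ⟨hex.choose_spec.1, hex.choose_spec.2⟩
  have hΓ_S : ∀ φ : ℝ → ℝ, inS φ → inS (Γ φ) := by
    intro φ hφ
    have hfixφ : Γ φ bstar = bstar := by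
      have hbr : f bstar - ε bstar bstar = φ bstar := by rw [hφ.2.1]; exact hfix
      exact root_unique φ hφ bstar hbsV (Γ φ bstar) (hΓ_root φ hφ bstar hbsV).1
        bstar hbsJ (hΓ_root φ hφ bstar hbsV).2 hbr
    refine ⟨fun y hy => (hΓ_root φ hφ y hy).1, hfixφ, ?_⟩
    intro y hy y' hy'
    obtain ⟨hxJ, hxr⟩ := hΓ_root φ hφ y hy
    obtain ⟨hxJ', hxr'⟩ := hΓ_root φ hφ y' hy'
    set x := Γ φ y
    set x' := Γ φ y'
    have h1 : D * |x - x'| ≤ |f x - f x'| := hexpabs x' hxJ' x hxJ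
    have h2 : |f x - f x'| ≤ |φ x - φ x'| + (|ε x y - ε x' y| + |ε x' y - ε x' y'|) := by
      have he : f x - f x' = (φ x - φ x') + ((ε x y - ε x' y) + (ε x' y - ε x' y')) := by
        linarith
      rw [he]
      calc |(φ x - φ x') + ((ε x y - ε x' y) + (ε x' y - ε x' y'))|
          ≤ |φ x - φ x'| + |(ε x y - ε x' y) + (ε x' y - ε x' y')| := abs_add_le _ _
        _ ≤ |φ x - φ x'| + (|ε x y - ε x' y| + |ε x' y - ε x' y'|) := by
            have := abs_add_le (ε x y - ε x' y) (ε x' y - ε x' y'); linarith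
    have h3 := hφ.2.2 x (hJV hxJ) x' (hJV hxJ')
    have h4 := hε1 x hxJ x' hxJ' y hy
    have h5 := hε2 x' hxJ' y hy y' hy'
    have h6 := abs_nonneg (x - x')
    nlinarith
  have hΓ_contract : ∀ φ φ' : ℝ → ℝ, inS φ → inS φ' → ∀ y ∈ V,
      |Γ φ y - Γ φ' y| ≤ c * |φ (Γ φ' y) - φ' (Γ φ' y)| := by
    intro φ φ' hφ hφ' y hy
    obtain ⟨hxJ, hxr⟩ := hΓ_root φ hφ y hy
    obtain ⟨hxJ', hxr'⟩ := hΓ_root φ' hφ' y hy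
    set x := Γ φ y
    set x' := Γ φ' y
    have h1 : D * |x - x'| ≤ |f x - f x'| := hexpabs x' hxJ' x hxJ
    have h2 : |f x - f x'| ≤ |φ x - φ x'| + (|φ x' - φ' x'| + |ε x y - ε x' y|) := by
      have he : f x - f x' = (φ x - φ x') + ((φ x' - φ' x') + (ε x y - ε x' y)) := by
        linarith
      rw [he]
      calc |(φ x - φ x') + ((φ x' - φ' x') + (ε x y - ε x' y))|
          ≤ |φ x - φ x'| + |(φ x' - φ' x') + (ε x y - ε x' y)| := abs_add_le _ _
        _ ≤ |φ x - φ x'| + (|φ x' - φ' x'| + |ε x y - ε x' y|) := by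
            have := abs_add_le (φ x' - φ' x') (ε x y - ε x' y); linarith
    have h3 := hφ.2.2 x (hJV hxJ) x' (hJV hxJ')
    have h4 := hε1 x hxJ x' hxJ' y hy
    have h6 := abs_nonneg (x - x')
    have h7 : (D - 2*δ) * |x - x'| ≤ |φ x' - φ' x'| := by nlinarith
    have h8 : |x - x'| ≤ c * ((D - 2*δ) * |x - x'|) := by nlinarith
    calc |x - x'| ≤ c * ((D - 2*δ) * |x - x'|) := h8
      _ ≤ c * |φ x' - φ' x'| := by nlinarith
  -- Picard iteration
  set seq : ℕ → ℝ → ℝ := fun n => Γ^[n] (fun _ => bstar) with hseq_def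
  have hseq_succ : ∀ n, seq (n+1) = Γ (seq n) := by
    intro n; rw [hseq_def]; exact Function.iterate_succ_apply' Γ n _
  have hseq_zero : ∀ y, seq 0 y = bstar := fun y => rfl
  have hseqS : ∀ n, inS (seq n) := by
    intro n; induction n with
    | zero =>
      refine ⟨fun y _ => hbsJ, rfl, ?_⟩
      intro y hy y' hy'
      simp only [hseq_zero, sub_self, abs_zero]
      positivity
    | succ n ih => rw [hseq_succ]; exact hΓ_S _ ih
  have hdiffb : ∀ n, ∀ y ∈ V, |seq (n+1) y - seq n y| ≤ c^n * (b - a) := by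
    intro n; induction n with
    | zero =>
      intro y hy
      obtain ⟨ha1, hb1⟩ := (hseqS 1).1 y hy
      rw [hseq_zero, pow_zero, one_mul, abs_le]
      constructor <;> linarith
    | succ n ih =>
      intro y hy
      have h := hΓ_contract (seq (n+1)) (seq n) (hseqS (n+1)) (hseqS n) y hy
      rw [← hseq_succ (n+1), ← hseq_succ n] at h
      have hzJ : seq (n+1) y ∈ Icc a b := (hseqS (n+1)).1 y hy
      have hih := ih (seq (n+1) y) (hJV hzJ)
      calc |seq (n+1+1) y - seq (n+1) y|
          ≤ c * |seq (n+1) (seq (n+1) y) - seq n (seq (n+1) y)| := h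
        _ ≤ c * (c^n * (b - a)) := by nlinarith
        _ = c^(n+1) * (b - a) := by ring
  have hCauchy : ∀ y ∈ V, CauchySeq (fun n => seq n y) := by
    intro y hy
    apply cauchySeq_of_le_geometric c (b - a) hc1
    intro n
    rw [Real.dist_eq, abs_sub_comm, mul_comm]
    exact hdiffb n y hy
  have hlimex : ∀ y ∈ V, ∃ l, Filter.Tendsto (fun n => seq n y) Filter.atTop (nhds l) :=
    fun y hy => cauchySeq_tendsto_of_complete (hCauchy y hy)
  set ψ : ℝ → ℝ := fun y => if hy : y ∈ V then (hlimex y hy).choose else bstar with hψ_def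
  have hψlim : ∀ y ∈ V, Filter.Tendsto (fun n => seq n y) Filter.atTop (nhds (ψ y)) := by
    intro y hy
    have : ψ y = (hlimex y hy).choose := by rw [hψ_def]; simp only [dif_pos hy]
    rw [this]; exact (hlimex y hy).choose_spec
  have hψJ : ∀ y ∈ V, ψ y ∈ Icc a b := fun y hy =>
    isClosed_Icc.mem_of_tendsto (hψlim y hy)
      (Filter.Eventually.of_forall fun n => (hseqS n).1 y hy)
  have hψbs : ψ bstar = bstar := by
    have h1 : (fun n => seq n bstar) = fun _ => bstar := funext fun n => (hseqS n).2.1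
    refine tendsto_nhds_unique (hψlim bstar hbsV) ?_
    rw [h1]; exact tendsto_const_nhds
  have hψlip : ∀ y ∈ V, ∀ y' ∈ V, |ψ y - ψ y'| ≤ δ * |y - y'| := by
    intro y hy y' hy'
    have h1 : Filter.Tendsto (fun n => |seq n y - seq n y'|) Filter.atTop (nhds |ψ y - ψ y'|) :=
      ((hψlim y hy).sub (hψlim y' hy')).abs
    exact le_of_tendsto h1 (Filter.Eventually.of_forall fun n => (hseqS n).2.2 y hy y' hy')
  have hψS : inS ψ := ⟨hψJ, hψbs, hψlip⟩
  have hψinv : ∀ y ∈ V, f (ψ y) - ε (ψ y) y = ψ (ψ y) := by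
    intro y hy
    have hψyJ := hψJ y hy
    have hψyV := hJV hψyJ
    have hz : Filter.Tendsto (fun n => seq (n+1) y) Filter.atTop (nhds (ψ y)) :=
      (hψlim y hy).comp (Filter.tendsto_add_atTop_nat 1)
    have hz0 : Filter.Tendsto (fun n => |seq (n+1) y - ψ y|) Filter.atTop (nhds 0) := by
      have := (hz.sub (tendsto_const_nhds (x := ψ y))).abs
      simpa using this
    have hfL : Filter.Tendsto (fun n => f (seq (n+1) y)) Filter.atTop (nhds (f (ψ y))) := by
      have hcw : ContinuousWithinAt f (Icc a b) (ψ y) := hcontf (ψ y) hψyJ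
      apply hcw.tendsto.comp
      apply tendsto_nhdsWithin_of_tendsto_nhds_of_eventually_within _ hz
      exact Filter.Eventually.of_forall fun n => (hseqS (n+1)).1 y hy
    have hεL : Filter.Tendsto (fun n => ε (seq (n+1) y) y) Filter.atTop (nhds (ε (ψ y) y)) := by
      rw [tendsto_iff_dist_tendsto_zero]
      apply squeeze_zero (fun n => dist_nonneg) (g := fun n => δ * |seq (n+1) y - ψ y|)
      · intro n
        rw [Real.dist_eq]
        have := hε1 (seq (n+1) y) ((hseqS (n+1)).1 y hy) (ψ y) hψyJ y hy
        exact this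
      · simpa using hz0.const_mul δ
    have hR : Filter.Tendsto (fun n => seq n (seq (n+1) y)) Filter.atTop (nhds (ψ (ψ y))) := by
      rw [tendsto_iff_dist_tendsto_zero]
      apply squeeze_zero (fun n => dist_nonneg)
        (g := fun n => δ * |seq (n+1) y - ψ y| + dist (seq n (ψ y)) (ψ (ψ y)))
      · intro n
        have ht := dist_triangle (seq n (seq (n+1) y)) (seq n (ψ y)) (ψ (ψ y))
        have hlp : dist (seq n (seq (n+1) y)) (seq n (ψ y)) ≤ δ * |seq (n+1) y - ψ y| := by
          rw [Real.dist_eq]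
          exact (hseqS n).2.2 (seq (n+1) y) (hJV ((hseqS (n+1)).1 y hy)) (ψ y) hψyV
        linarith
      · have h2 : Filter.Tendsto (fun n => dist (seq n (ψ y)) (ψ (ψ y)))
            Filter.atTop (nhds 0) :=
          tendsto_iff_dist_tendsto_zero.mp (hψlim (ψ y) hψyV)
        simpa using (hz0.const_mul δ).add h2
    have heq : (fun n => f (seq (n+1) y) - ε (seq (n+1) y) y)
        = fun n => seq n (seq (n+1) y) := by
      funext n
      have h := (hΓ_root (seq n) (hseqS n) y hy).2
      rw [hseq_succ n]
      exact h
    refine tendsto_nhds_unique (hfL.sub hεL) ?_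
    rw [heq]
    exact hR
  have key : ∀ g : ℝ → ℝ, inS g → (∀ y ∈ V, f (g y) - ε (g y) y = g (g y)) →
      ∀ y ∈ V, g y = Γ g y := by
    intro g hg hgeq y hy
    exact root_unique g hg y hy (g y) (hg.1 y hy) (Γ g y) (hΓ_root g hg y hy).1
      (hgeq y hy) (hΓ_root g hg y hy).2
  refine ⟨ψ, hψJ, hψbs, hψlip, hψinv, ?_, ?_⟩
  · -- uniqueness
    intro ψ' h1' h2' h3' h4'
    have hS' : inS ψ' := ⟨h1', h2', h3'⟩
    have hstep : ∀ n, ∀ y ∈ V, |ψ' y - ψ y| ≤ c^n * (b - a) := by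
      intro n; induction n with
      | zero =>
        intro y hy
        obtain ⟨ha1, hb1⟩ := h1' y hy
        obtain ⟨ha2, hb2⟩ := hψJ y hy
        rw [pow_zero, one_mul, abs_le]
        constructor <;> linarith
      | succ n ih =>
        intro y hy
        have e1 : ψ' y = Γ ψ' y := key ψ' hS' h4' y hy
        have e2 : ψ y = Γ ψ y := key ψ hψS hψinv y hy
        have h := hΓ_contract ψ' ψ hS' hψS y hy
        rw [← e1, ← e2] at h
        have hih := ih (ψ y) (hJV (hψJ y hy))
        calc |ψ' y - ψ y| ≤ c * |ψ' (ψ y) - ψ (ψ y)| := h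
          _ ≤ c * (c^n * (b - a)) := by nlinarith
          _ = c^(n+1) * (b - a) := by ring
    intro y hy
    have hlim0 : Filter.Tendsto (fun n : ℕ => c^n * (b - a)) Filter.atTop (nhds 0) := by
      simpa using (tendsto_pow_atTop_nhds_zero_of_lt_one hc0.le hc1).mul_const (b - a)
    have hle : |ψ' y - ψ y| ≤ 0 :=
      ge_of_tendsto hlim0 (Filter.Eventually.of_forall fun n => hstep n y hy)
    have h0 : |ψ' y - ψ y| = 0 := le_antisymm hle (abs_nonneg _)
    have := abs_eq_zero.mp h0
    linarith
  · -- convergence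
    intro y hy
    have hwV : ∀ n, ψ^[n] y ∈ V := by
      intro n; induction n with
      | zero => exact hy
      | succ n ih => rw [Function.iterate_succ_apply']; exact hJV (hψJ _ ih)
    have hFiter : ∀ n, (fun p : ℝ × ℝ => (f p.1 - ε p.1 p.2, p.1))^[n] (ψ y, y)
        = (ψ (ψ^[n] y), ψ^[n] y) := by
      intro n; induction n with
      | zero => simp
      | succ n ih =>
        rw [Function.iterate_succ_apply', ih, Function.iterate_succ_apply']
        simp only
        rw [hψinv (ψ^[n] y) (hwV n)]
    have hwd : ∀ n, dist (ψ^[n] y) bstar ≤ δ^n * |y - bstar| := by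
      intro n; induction n with
      | zero => simp [Real.dist_eq]
      | succ n ih =>
        rw [Function.iterate_succ_apply', Real.dist_eq]
        have h1 : |ψ (ψ^[n] y) - ψ bstar| ≤ δ * |ψ^[n] y - bstar| :=
          hψlip (ψ^[n] y) (hwV n) bstar hbsV
        rw [hψbs] at h1
        rw [Real.dist_eq] at ih
        calc |ψ (ψ^[n] y) - bstar| ≤ δ * |ψ^[n] y - bstar| := h1
          _ ≤ δ * (δ^n * |y - bstar|) := by nlinarith
          _ = δ^(n+1) * |y - bstar| := by ring
    have hgeom : Filter.Tendsto (fun n : ℕ => δ^n * |y - bstar|) Filter.atTop (nhds 0) := by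
      have hδ1 : δ < 1 := by linarith
      simpa using (tendsto_pow_atTop_nhds_zero_of_lt_one hδ.le hδ1).mul_const |y - bstar|
    have hwlim : Filter.Tendsto (fun n => ψ^[n] y) Filter.atTop (nhds bstar) := by
      rw [tendsto_iff_dist_tendsto_zero]
      exact squeeze_zero (fun n => dist_nonneg) hwd hgeom
    have hψwlim : Filter.Tendsto (fun n => ψ (ψ^[n] y)) Filter.atTop (nhds bstar) := by
      rw [tendsto_iff_dist_tendsto_zero]
      apply squeeze_zero (fun n => dist_nonneg) (g := fun n => δ * dist (ψ^[n] y) bstar)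
      · intro n
        rw [Real.dist_eq, Real.dist_eq]
        have h1 := hψlip (ψ^[n] y) (hwV n) bstar hbsV
        rw [hψbs] at h1
        exact h1
      · have := (tendsto_iff_dist_tendsto_zero.mp hwlim).const_mul δ
        simpa using this
    have hfun : (fun n => (fun p : ℝ × ℝ => (f p.1 - ε p.1 p.2, p.1))^[n] (ψ y, y))
        = fun n => (ψ (ψ^[n] y), ψ^[n] y) := funext hFiter
    rw [hfun]
    exact hψwlim.prodMk_nhds hwlim
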